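/- Let γ > 0, Δ > 0, R_S > 0. The coefficient σ₁ = Σ_{k=0}^{1} (−1)^k C(1,k)/(1−2k) equals 2, so the n = 1 shock-speed constant is C₁ = γ² · 2⁰ · Δ · R_S^{3/2} / (3 σ₁) = γ²Δ R_S^{3/2}/6. The function L(t) = ((9/2) C₁ t)^{2/9} satisfies L(0) = 0, is differentiable on (0,∞) with L'(t) = C₁ · L(t)^{−7/2} for all t > 0, and L(T) = R_S holds exactly for T = (4/3) R_S³ / (γ²Δ). Hence the n = 1 black-hole lifetime is T_BH = (4/3) R_S³/(γ²Δ), proportional to the cube of the black-hole mass. -/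
import Mathlib


open Real Finset

/-- The `n = 1` shock-speed constant `C₁ = γ²Δ R_S^{3/2}/6`. -/
noncomputable def Cone (γ Δ RS : ℝ) : ℝ := γ ^ 2 * Δ * RS ^ ((3 : ℝ) / 2) / 6

/-- The `n = 1` shock location `L(t) = ((9/2) C₁ t)^{2/9}`. -/
noncomputable def Lone (γ Δ RS t : ℝ) : ℝ :=
  ((9 / 2) * Cone γ Δ RS * t) ^ ((2 : ℝ) / 9)

/-- For `n = 1`: the coefficient `σ₁ = Σ_{k=0}^{1} (−1)^k C(1,k)/(1−2k)` equals
`2`, so `C₁ = γ²·2⁰·Δ·R_S^{3/2}/(3σ₁) = γ²Δ R_S^{3/2}/6`; the shock trajectory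
`L(t) = ((9/2)C₁ t)^{2/9}` starts at the centre, solves `L' = C₁ L^{−7/2}`, and
reaches the horizon `L = R_S` exactly at `T = (4/3) R_S³/(γ²Δ)`: the `n = 1`
black-hole lifetime is cubic in the mass. -/
theorem black_hole_lifetime_n_one
    (γ Δ RS : ℝ) (hγ : 0 < γ) (hΔ : 0 < Δ) (hRS : 0 < RS) :
    (∑ k ∈ Finset.range 2,
        (-1 : ℝ) ^ k * ((Nat.choose 1 k : ℕ) : ℝ) / (1 - 2 * (k : ℝ))) = 2 ∧
    γ ^ 2 * 2 ^ (0 : ℕ) * Δ * RS ^ ((3 : ℝ) / 2) /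
        (3 * ∑ k ∈ Finset.range 2,
          (-1 : ℝ) ^ k * ((Nat.choose 1 k : ℕ) : ℝ) / (1 - 2 * (k : ℝ))) =
      Cone γ Δ RS ∧
    Lone γ Δ RS 0 = 0 ∧
    (∀ t, 0 < t → HasDerivAt (fun t' => Lone γ Δ RS t')
      (Cone γ Δ RS * (Lone γ Δ RS t) ^ (-(7 : ℝ) / 2)) t) ∧
    Lone γ Δ RS ((4 / 3) * RS ^ 3 / (γ ^ 2 * Δ)) = RS := by
  have hsum : (∑ k ∈ Finset.range 2,
      (-1 : ℝ) ^ k * ((Nat.choose 1 k : ℕ) : ℝ) / (1 - 2 * (k : ℝ))) = 2 := by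
    simp [Finset.sum_range_succ]
    norm_num
  have hC : 0 < Cone γ Δ RS := by
    have : 0 < RS ^ ((3:ℝ)/2) := Real.rpow_pos_of_pos hRS _
    unfold Cone; positivity
  refine ⟨hsum, ?_, ?_, ?_, ?_⟩
  · rw [hsum]; unfold Cone; ring
  · unfold Lone
    rw [mul_zero, Real.zero_rpow (by norm_num)]
  · intro t ht
    have hat : 0 < (9 / 2) * Cone γ Δ RS * t := by positivity
    have h1 : HasDerivAt (fun t' : ℝ => (9 / 2) * Cone γ Δ RS * t')
        ((9 / 2) * Cone γ Δ RS) t := by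
      simpa using (hasDerivAt_id t).const_mul ((9 / 2) * Cone γ Δ RS)
    have h2 := h1.rpow_const (p := (2:ℝ)/9) (Or.inl hat.ne')
    have key : (9 / 2) * Cone γ Δ RS * ((2:ℝ)/9)
          * ((9 / 2) * Cone γ Δ RS * t) ^ ((2:ℝ)/9 - 1)
        = Cone γ Δ RS * (((9 / 2) * Cone γ Δ RS * t) ^ ((2:ℝ)/9)) ^ (-(7:ℝ)/2) := by
      rw [← Real.rpow_mul hat.le,
        show (2:ℝ)/9 * (-(7:ℝ)/2) = (2:ℝ)/9 - 1 by norm_num]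
      ring
    unfold Lone
    exact key ▸ h2
  · unfold Lone Cone
    have h3 : RS ^ ((3:ℝ)/2) * RS ^ (3:ℕ) = RS ^ ((9:ℝ)/2) := by
      rw [← Real.rpow_natCast RS 3, ← Real.rpow_add hRS]
      norm_num
    have harg : 9 / 2 * (γ ^ 2 * Δ * RS ^ ((3:ℝ)/2) / 6) * (4 / 3 * RS ^ 3 / (γ ^ 2 * Δ))
        = RS ^ ((9:ℝ)/2) := by
      rw [← h3]
      field_simp
      ring
    rw [harg, ← Real.rpow_mul hRS.le]
    norm_num
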